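/- arXiv:1502.02619 — 3 statements merged into one kernel-verified Lean document; each statement's English description precedes it below -/
import Mathlib

section
/- For all integers x and y, |x-y|^(2|x-y|) ≤ (2|x|)^(2|x|) · (2|y|)^(2|y|), with equality if and only if x = -y. (Here 0^0 is interpreted as 1.) -/
open Real in
lemma real_key {a b : ℝ} (ha : 0 < a) (hb : 0 < b) (hab : a ≠ b) :
    (a + b) * Real.log (a + b) < a * Real.log (2 * a) + b * Real.log (2 * b) := by
  have h := Real.strictConvexOn_mul_log.2 (Set.mem_Ici.2 ha.le) (Set.mem_Ici.2 hb.le) hab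
      (by norm_num : (0:ℝ) < 1/2) (by norm_num : (0:ℝ) < 1/2) (by norm_num)
  simp only [smul_eq_mul] at h
  rw [show (1/2:ℝ)*a + 1/2*b = (a+b)/2 by ring] at h
  have hla : Real.log (2 * a) = Real.log 2 + Real.log a := Real.log_mul (by norm_num) ha.ne'
  have hlb : Real.log (2 * b) = Real.log 2 + Real.log b := Real.log_mul (by norm_num) hb.ne'
  have hls : Real.log ((a + b) / 2) = Real.log (a + b) - Real.log 2 :=
    Real.log_div (by positivity) (by norm_num)
  rw [hls] at h
  rw [hla, hlb]
  nlinarith [h]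

lemma nat_key {a b : ℕ} (hab : a ≠ b) :
    (a + b) ^ (a + b) < (2 * a) ^ a * (2 * b) ^ b := by
  rcases Nat.eq_zero_or_pos a with rfl | ha
  · rcases Nat.eq_zero_or_pos b with rfl | hb
    · simp at hab
    · simpa using Nat.pow_lt_pow_left (by omega) (by omega)
  rcases Nat.eq_zero_or_pos b with rfl | hb
  · simpa using Nat.pow_lt_pow_left (by omega) (by omega)
  have hA : (0:ℝ) < (a:ℝ) := by exact_mod_cast ha
  have hB : (0:ℝ) < (b:ℝ) := by exact_mod_cast hb
  have hne : (a:ℝ) ≠ (b:ℝ) := by exact_mod_cast hab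
  have hexp := Real.exp_lt_exp.2 (real_key hA hB hne)
  rw [Real.exp_add] at hexp
  have e1 : Real.exp (((a:ℝ) + b) * Real.log ((a:ℝ) + b)) = ((a:ℝ) + b) ^ (a + b) := by
    rw [show ((a:ℝ)+b) * Real.log ((a:ℝ)+b) = ((a+b:ℕ):ℝ) * Real.log ((a:ℝ)+b) by
        push_cast; ring,
      Real.exp_nat_mul, Real.exp_log (by positivity)]
  have e2 : Real.exp ((a:ℝ) * Real.log (2 * a)) = (2 * (a:ℝ)) ^ a := by
    rw [Real.exp_nat_mul, Real.exp_log (by positivity)]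
  have e3 : Real.exp ((b:ℝ) * Real.log (2 * b)) = (2 * (b:ℝ)) ^ b := by
    rw [Real.exp_nat_mul, Real.exp_log (by positivity)]
  rw [e1, e2, e3] at hexp
  have : ((a + b : ℕ) : ℝ) ^ (a + b) < ((2*a : ℕ):ℝ) ^ a * ((2*b : ℕ):ℝ) ^ b := by
    push_cast; exact hexp
  exact_mod_cast this

theorem stmt0 (x y : ℤ) :
    (x - y).natAbs ^ (2 * (x - y).natAbs) ≤
      (2 * x.natAbs) ^ (2 * x.natAbs) * (2 * y.natAbs) ^ (2 * y.natAbs) ∧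
    ((x - y).natAbs ^ (2 * (x - y).natAbs) =
      (2 * x.natAbs) ^ (2 * x.natAbs) * (2 * y.natAbs) ^ (2 * y.natAbs) ↔ x = -y) := by
  obtain ⟨a, ha⟩ : ∃ a, x.natAbs = a := ⟨_, rfl⟩
  obtain ⟨b, hb⟩ : ∃ b, y.natAbs = b := ⟨_, rfl⟩
  obtain ⟨d, hdd⟩ : ∃ d, (x - y).natAbs = d := ⟨_, rfl⟩
  rw [ha, hb, hdd]
  have hsq : ∀ n : ℕ, n ^ (2 * n) = (n ^ n) ^ 2 := fun n => by rw [← pow_mul, Nat.mul_comm]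
  have hsq' : ∀ n : ℕ, (2*n) ^ (2*n) = ((2*n) ^ n) ^ 2 := fun n => by
    rw [← pow_mul, Nat.mul_comm]
  by_cases hxy : x = -y
  · -- equality case
    subst hxy
    have hab : a = b := by rw [← ha, ← hb, Int.natAbs_neg]
    have hd2 : d = 2 * b := by
      rw [← hdd, ← hb, show -y - y = -(2*y) by ring, Int.natAbs_neg, Int.natAbs_mul]; rfl
    have heq : d ^ (2*d) = (2*a) ^ (2*a) * (2*b) ^ (2*b) := by
      rw [hd2, hab, ← pow_add]
      congr 1
      omega
    exact ⟨heq.le, ⟨fun _ => rfl, fun _ => heq⟩⟩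
  · -- strict case
    have hk : d ^ d < (2*a) ^ a * (2*b) ^ b := by
      have hdab : d ≤ a + b := by
        rw [← ha, ← hb, ← hdd]; exact Int.natAbs_sub_le x y
      by_cases hab : a = b
      · have hx : x = y ∨ x = -y := by
          have : x.natAbs = y.natAbs := by rw [ha, hb, hab]
          rcases Int.natAbs_eq_natAbs_iff.1 this with h | h
          · left; exact h
          · right; exact h
        rcases hx with rfl | h
        · have hd0 : d = 0 := by rw [← hdd]; simp
          have ha1 : 1 ≤ a := by
            rcases Nat.eq_zero_or_pos a with h0 | h1
            · exfalso; apply hxy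
              have hx0 : x = 0 := Int.natAbs_eq_zero.1 (by rw [ha, h0])
              rw [hx0]; norm_num
            · exact h1
          rw [hd0]
          calc (0:ℕ) ^ 0 = 1 := by norm_num
          _ < (2*a)^a * (2*b)^b := by
              calc 1 < (2*a)^a := Nat.one_lt_pow (by omega) (by omega)
              _ ≤ (2*a)^a * (2*b)^b :=
                Nat.le_mul_of_pos_right _ (Nat.pow_pos (by omega))
        · exact absurd h hxy
      · have h1 : d ^ d ≤ (a + b) ^ (a + b) := by
          rcases Nat.eq_zero_or_pos d with h0 | hd1
          · rw [h0]; exact Nat.one_le_pow _ _ (by omega)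
          · exact (Nat.pow_le_pow_left hdab _).trans (Nat.pow_le_pow_right (by omega) hdab)
        exact h1.trans_lt (nat_key hab)
    have hlt : d ^ (2*d) < (2*a) ^ (2*a) * (2*b) ^ (2*b) := by
      rw [hsq, hsq', hsq', ← mul_pow]
      exact Nat.pow_lt_pow_left hk (by norm_num)
    exact ⟨hlt.le, ⟨fun h => absurd h hlt.ne, fun h => absurd h hxy⟩⟩
end

section
/- In the group G = ⟨a,b,t | [a,b]=1, t⁻¹at = b⟩, let H be the subgroup generated by a⁻¹b and t. Define α₀ = 1 and αₙ = t·(a⁻¹b)ⁿ·αₙ₋₁ for n ≥ 1, and define βₙ = aⁿ·(t·a⁻¹)ⁿ. Then αₙ = βₙ for all n ≥ 0. -/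
/-- Relators for `G = ⟨a,b,t ∣ [a,b] = 1, t⁻¹at = b⟩` (generators `0 ↦ a`, `1 ↦ b`, `2 ↦ t`). -/
def bksRels : Set (FreeGroup (Fin 3)) :=
  { FreeGroup.of 0 * FreeGroup.of 1 * (FreeGroup.of 0)⁻¹ * (FreeGroup.of 1)⁻¹,
    (FreeGroup.of 2)⁻¹ * FreeGroup.of 0 * FreeGroup.of 2 * (FreeGroup.of 1)⁻¹ }

/-- The Burns–Karrass–Solitar tubular group. -/
abbrev BKS := PresentedGroup bksRels

def bksA : BKS := PresentedGroup.of 0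
def bksB : BKS := PresentedGroup.of 1
def bksT : BKS := PresentedGroup.of 2

/-- `αₙ`, defined by `α₀ = 1` and `αₙ = t (a⁻¹b)ⁿ αₙ₋₁`. -/
def bksAlpha : ℕ → BKS
  | 0 => 1
  | n + 1 => bksT * (bksA⁻¹ * bksB) ^ (n + 1) * bksAlpha n

lemma bks_rel_one (r : FreeGroup (Fin 3)) (hr : r ∈ bksRels) :
    (PresentedGroup.mk bksRels r : BKS) = 1 :=
  (QuotientGroup.eq_one_iff r).mpr (Subgroup.subset_normalClosure hr)

lemma bks_comm : Commute bksA bksB := by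
  have h := bks_rel_one (FreeGroup.of 0 * FreeGroup.of 1 * (FreeGroup.of 0)⁻¹ *
      (FreeGroup.of 1)⁻¹) (by left; rfl)
  simp only [map_mul, map_inv] at h
  exact commutatorElement_eq_one_iff_commute.mp h

lemma bks_at : bksA * bksT = bksT * bksB := by
  have h := bks_rel_one ((FreeGroup.of 2)⁻¹ * FreeGroup.of 0 * FreeGroup.of 2 *
      (FreeGroup.of 1)⁻¹) (by right; rfl)
  simp only [map_mul, map_inv] at h
  have h' : bksT⁻¹ * bksA * bksT * bksB⁻¹ = 1 := h
  have hb : bksT⁻¹ * bksA * bksT = bksB := by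
    have := mul_eq_one_iff_eq_inv.mp h'
    simpa using this
  calc bksA * bksT = bksT * (bksT⁻¹ * bksA * bksT) := by group
    _ = bksT * bksB := by rw [hb]

lemma bks_at_pow (k : ℕ) : bksA ^ k * bksT = bksT * bksB ^ k := by
  induction k with
  | zero => simp
  | succ k ih =>
    calc bksA ^ (k+1) * bksT = bksA ^ k * (bksA * bksT) := by rw [pow_succ]; group
      _ = bksA ^ k * bksT * bksB := by rw [bks_at]; group
      _ = bksT * bksB ^ (k+1) := by rw [ih, pow_succ]; group

theorem stmt6 (n : ℕ) : bksAlpha n = bksA ^ n * (bksT * bksA⁻¹) ^ n := by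
  induction n with
  | zero => simp [bksAlpha]
  | succ n ih =>
    have hcomm : Commute bksA⁻¹ bksB := bks_comm.inv_left
    have hpow : (bksA⁻¹ * bksB) ^ (n+1) = (bksA ^ (n+1))⁻¹ * bksB ^ (n+1) := by
      rw [hcomm.mul_pow, inv_pow]
    have key : bksT * bksB ^ (n+1) = bksA ^ (n+1) * bksT := (bks_at_pow (n+1)).symm
    calc bksAlpha (n+1) = bksT * (bksA⁻¹ * bksB) ^ (n+1) * bksAlpha n := rfl
      _ = bksT * ((bksA ^ (n+1))⁻¹ * bksB ^ (n+1)) * (bksA ^ n * (bksT * bksA⁻¹) ^ n) := by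
          rw [hpow, ih]
      _ = bksT * ((bksA ^ (n+1))⁻¹ * (bksB ^ (n+1) * bksA ^ n)) * (bksT * bksA⁻¹) ^ n := by
          group
      _ = bksT * ((bksA ^ (n+1))⁻¹ * (bksA ^ n * bksB ^ (n+1))) * (bksT * bksA⁻¹) ^ n := by
          rw [(bks_comm.pow_pow n (n+1)).eq]
      _ = bksT * (bksA⁻¹ * bksB ^ (n+1)) * (bksT * bksA⁻¹) ^ n := by
          rw [pow_succ]; group
      _ = bksT * (bksB ^ (n+1) * bksA⁻¹) * (bksT * bksA⁻¹) ^ n := by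
          rw [(hcomm.pow_right (n+1)).eq]
      _ = bksT * bksB ^ (n+1) * (bksA⁻¹ * (bksT * bksA⁻¹) ^ n) := by group
      _ = bksA ^ (n+1) * (bksT * bksA⁻¹ * (bksT * bksA⁻¹) ^ n) := by
          rw [key, mul_assoc, mul_assoc, ← mul_assoc bksT]
      _ = bksA ^ (n+1) * (bksT * bksA⁻¹) ^ (n+1) := by rw [← pow_succ']
end

section
/- Let n ≥ 1 and let (x₁,y₁),…,(xₙ,yₙ) be nonzero integer pairs (each (xᵢ,yᵢ) ≠ (0,0)) satisfying 2·Σ|xᵢ| = 2·Σ|yᵢ| = Σ|xᵢ−yᵢ|, and suppose (x₁,y₁) is not of the form (k,−k). Then ∏_{i=1}^n |xᵢ−yᵢ|^{2|xᵢ−yᵢ|} / ((2|xᵢ|)^{2|xᵢ|}·(2|yᵢ|)^{2|yᵢ|}) < 1, where 0⁰ = 1. -/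
private lemma strict_am_gm {w₁ w₂ p₁ p₂ : ℝ} (hw₁ : 0 < w₁) (hw₂ : 0 < w₂)
    (hw : w₁ + w₂ = 1) (hp₁ : 0 < p₁) (hp₂ : 0 < p₂) (hp : p₁ ≠ p₂) :
    p₁ ^ w₁ * p₂ ^ w₂ < w₁ * p₁ + w₂ * p₂ := by
  have hne : Real.log p₁ ≠ Real.log p₂ := by
    intro h
    exact hp (by rw [← Real.exp_log hp₁, h, Real.exp_log hp₂])
  have h := strictConvexOn_exp.2 (Set.mem_univ (Real.log p₁)) (Set.mem_univ (Real.log p₂))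
    hne hw₁ hw₂ hw
  simp only [smul_eq_mul] at h
  rwa [Real.exp_add, Real.exp_log hp₁, Real.exp_log hp₂, mul_comm w₁ (Real.log p₁),
    mul_comm w₂ (Real.log p₂), ← Real.rpow_def_of_pos hp₁, ← Real.rpow_def_of_pos hp₂] at h

private lemma core_lt {a b : ℕ} (ha : 0 < a) (hb : 0 < b) (hne : a ≠ b) :
    ((a + b : ℕ) : ℝ) ^ (a + b) < ((2 * a : ℕ) : ℝ) ^ a * ((2 * b : ℕ) : ℝ) ^ b := by
  have hA : (0:ℝ) < (a:ℝ) := by exact_mod_cast ha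
  have hB : (0:ℝ) < (b:ℝ) := by exact_mod_cast hb
  have hS : (0:ℝ) < (a:ℝ) + (b:ℝ) := by linarith
  have hAB : (a:ℝ) ≠ (b:ℝ) := by exact_mod_cast hne
  have hpne : ((a:ℝ)+(b:ℝ))/(2*(a:ℝ)) ≠ ((a:ℝ)+(b:ℝ))/(2*(b:ℝ)) := by
    intro h
    field_simp at h
    exact hAB h.symm
  have key := strict_am_gm (w₁ := (a:ℝ)/((a:ℝ)+(b:ℝ))) (w₂ := (b:ℝ)/((a:ℝ)+(b:ℝ)))
    (p₁ := ((a:ℝ)+(b:ℝ))/(2*(a:ℝ))) (p₂ := ((a:ℝ)+(b:ℝ))/(2*(b:ℝ)))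
    (by positivity) (by positivity) (by field_simp) (by positivity) (by positivity) hpne
  have hrhs : (a:ℝ)/((a:ℝ)+(b:ℝ)) * (((a:ℝ)+(b:ℝ))/(2*(a:ℝ)))
      + (b:ℝ)/((a:ℝ)+(b:ℝ)) * (((a:ℝ)+(b:ℝ))/(2*(b:ℝ))) = 1 := by
    field_simp
    ring
  rw [hrhs] at key
  have hX0 : (0:ℝ) ≤ (((a:ℝ)+(b:ℝ))/(2*(a:ℝ))) ^ ((a:ℝ)/((a:ℝ)+(b:ℝ)))
      * (((a:ℝ)+(b:ℝ))/(2*(b:ℝ))) ^ ((b:ℝ)/((a:ℝ)+(b:ℝ))) := by positivity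
  have hpow : ((((a:ℝ)+(b:ℝ))/(2*(a:ℝ))) ^ ((a:ℝ)/((a:ℝ)+(b:ℝ)))
      * (((a:ℝ)+(b:ℝ))/(2*(b:ℝ))) ^ ((b:ℝ)/((a:ℝ)+(b:ℝ)))) ^ (a+b) < 1 := by
    have := pow_lt_one₀ hX0 key (n := a+b) (by omega)
    simpa using this
  have hXeq : ((((a:ℝ)+(b:ℝ))/(2*(a:ℝ))) ^ ((a:ℝ)/((a:ℝ)+(b:ℝ)))
      * (((a:ℝ)+(b:ℝ))/(2*(b:ℝ))) ^ ((b:ℝ)/((a:ℝ)+(b:ℝ)))) ^ (a+b)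
      = ((a:ℝ)+(b:ℝ)) ^ (a+b) / ((2*(a:ℝ)) ^ a * (2*(b:ℝ)) ^ b) := by
    rw [mul_pow,
      ← Real.rpow_natCast ((((a:ℝ)+(b:ℝ))/(2*(a:ℝ))) ^ ((a:ℝ)/((a:ℝ)+(b:ℝ)))) (a+b),
      ← Real.rpow_natCast ((((a:ℝ)+(b:ℝ))/(2*(b:ℝ))) ^ ((b:ℝ)/((a:ℝ)+(b:ℝ)))) (a+b),
      ← Real.rpow_mul (by positivity), ← Real.rpow_mul (by positivity)]
    have e1 : (a:ℝ)/((a:ℝ)+(b:ℝ)) * ((a+b : ℕ) : ℝ) = ((a:ℕ):ℝ) := by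
      push_cast
      field_simp
    have e2 : (b:ℝ)/((a:ℝ)+(b:ℝ)) * ((a+b : ℕ) : ℝ) = ((b:ℕ):ℝ) := by
      push_cast
      field_simp
    rw [e1, e2, Real.rpow_natCast, Real.rpow_natCast, div_pow, div_pow,
      div_mul_div_comm, ← pow_add]
  rw [hXeq, div_lt_one (by positivity)] at hpow
  push_cast
  exact hpow

private lemma nat_lt {a b : ℕ} (hne : a ≠ b) :
    (a+b)^(2*(a+b)) < (2*a)^(2*a) * (2*b)^(2*b) := by
  rcases Nat.eq_zero_or_pos a with ha | ha
  · subst ha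
    have hb : 0 < b := Nat.pos_of_ne_zero (fun h => hne (h ▸ rfl))
    simp only [Nat.zero_add, Nat.mul_zero, pow_zero, one_mul]
    exact Nat.pow_lt_pow_left (by omega) (by omega)
  rcases Nat.eq_zero_or_pos b with hb | hb
  · subst hb
    simp only [Nat.add_zero, Nat.mul_zero, pow_zero, mul_one]
    exact Nat.pow_lt_pow_left (by omega) (by omega)
  have h := core_lt ha hb hne
  have h' : (a+b)^(a+b) < (2*a)^a * (2*b)^b := by exact_mod_cast h
  calc (a+b)^(2*(a+b)) = ((a+b)^(a+b))^2 := by rw [← pow_mul]; ring_nf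
    _ < ((2*a)^a * (2*b)^b)^2 := Nat.pow_lt_pow_left h' (by norm_num)
    _ = (2*a)^(2*a) * (2*b)^(2*b) := by rw [mul_pow, ← pow_mul, ← pow_mul]; ring_nf

private lemma nat_le (a b : ℕ) : (a+b)^(2*(a+b)) ≤ (2*a)^(2*a) * (2*b)^(2*b) := by
  by_cases h : a = b
  · subst h
    refine le_of_eq ?_
    rw [← pow_add]
    congr 1 <;> ring
  · exact (nat_lt h).le

private lemma mid_le {a b d : ℕ} (hd : d ≤ a + b) (hs : 0 < a + b) :
    d ^ (2*d) ≤ (a+b)^(2*(a+b)) := by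
  rcases Nat.eq_zero_or_pos d with h0 | h0
  · subst h0
    simpa using Nat.one_le_pow _ _ hs
  · calc d^(2*d) ≤ (a+b)^(2*d) := Nat.pow_le_pow_left hd _
      _ ≤ (a+b)^(2*(a+b)) := Nat.pow_le_pow_right hs (by omega)

private lemma main_le {a b d : ℕ} (hd : d ≤ a + b) (hs : 0 < a + b) :
    d ^ (2*d) ≤ (2*a)^(2*a) * (2*b)^(2*b) :=
  le_trans (mid_le hd hs) (nat_le a b)

private lemma main_lt {a b d : ℕ} (hd : d ≤ a + b) (hs : 0 < a + b)
    (h : ¬(a = b ∧ d = a + b)) :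
    d ^ (2*d) < (2*a)^(2*a) * (2*b)^(2*b) := by
  by_cases hab : a = b
  · have hdlt : d < a + b := lt_of_le_of_ne hd (fun hdd => h ⟨hab, hdd⟩)
    have hs2 : 2 ≤ a + b := by omega
    refine lt_of_lt_of_le ?_ (nat_le a b)
    rcases Nat.eq_zero_or_pos d with h0 | h0
    · subst h0
      simpa using Nat.one_lt_pow (by omega) (by omega)
    · calc d^(2*d) < (a+b)^(2*d) := Nat.pow_lt_pow_left hdlt (by omega)
        _ ≤ (a+b)^(2*(a+b)) := Nat.pow_le_pow_right (by omega) (by omega)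
  · exact lt_of_le_of_lt (mid_le hd hs) (nat_lt hab)

private lemma aux_pos (m k : ℕ) (h : m = 0 → k = 0) : 0 < m ^ k := by
  rcases Nat.eq_zero_or_pos m with h0 | h0
  · subst h0
    simp [h rfl]
  · exact Nat.pow_pos h0

theorem stmt11 (n : ℕ) (hn : 0 < n) (x y : Fin n → ℤ)
    (hnz : ∀ i, (x i, y i) ≠ (0, 0))
    (h1 : 2 * ∑ i, |x i| = ∑ i, |x i - y i|)
    (h2 : 2 * ∑ i, |y i| = ∑ i, |x i - y i|)
    (hfirst : ¬ ∃ k : ℤ, x ⟨0, hn⟩ = k ∧ y ⟨0, hn⟩ = -k) :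
    ∏ i, (((x i - y i).natAbs ^ (2 * (x i - y i).natAbs) : ℚ) /
      (((2 * (x i).natAbs) ^ (2 * (x i).natAbs) : ℚ) *
        ((2 * (y i).natAbs) ^ (2 * (y i).natAbs) : ℚ))) < 1 := by
  classical
  set i0 : Fin n := ⟨0, hn⟩ with hi0
  -- per-index basic facts
  have hd : ∀ i : Fin n, (x i - y i).natAbs ≤ (x i).natAbs + (y i).natAbs :=
    fun i => Int.natAbs_sub_le _ _
  have hs : ∀ i : Fin n, 0 < (x i).natAbs + (y i).natAbs := by
    intro i
    rcases Nat.eq_zero_or_pos ((x i).natAbs + (y i).natAbs) with h | h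
    · exfalso
      apply hnz i
      have ha : (x i).natAbs = 0 := by omega
      have hb : (y i).natAbs = 0 := by omega
      rw [Int.natAbs_eq_zero] at ha hb
      simp [ha, hb]
    · exact h
  have hdenpos : ∀ i : Fin n,
      (0:ℚ) < ((2 * (x i).natAbs) ^ (2 * (x i).natAbs) : ℚ) *
        ((2 * (y i).natAbs) ^ (2 * (y i).natAbs) : ℚ) := by
    intro i
    have h1' : 0 < (2 * (x i).natAbs) ^ (2 * (x i).natAbs) := aux_pos _ _ (fun h => h)
    have h2' : 0 < (2 * (y i).natAbs) ^ (2 * (y i).natAbs) := aux_pos _ _ (fun h => h)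
    have := Nat.mul_pos h1' h2'
    exact_mod_cast this
  have hle : ∀ i ∈ Finset.univ, (((x i - y i).natAbs ^ (2 * (x i - y i).natAbs) : ℚ) /
      (((2 * (x i).natAbs) ^ (2 * (x i).natAbs) : ℚ) *
        ((2 * (y i).natAbs) ^ (2 * (y i).natAbs) : ℚ))) ≤ 1 := by
    intro i _
    rw [div_le_one (hdenpos i)]
    exact_mod_cast main_le (hd i) (hs i)
  have hpos : ∀ i ∈ Finset.univ, (0:ℚ) < (((x i - y i).natAbs ^ (2 * (x i - y i).natAbs) : ℚ) /
      (((2 * (x i).natAbs) ^ (2 * (x i).natAbs) : ℚ) *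
        ((2 * (y i).natAbs) ^ (2 * (y i).natAbs) : ℚ))) := by
    intro i _
    apply div_pos _ (hdenpos i)
    have : 0 < (x i - y i).natAbs ^ (2 * (x i - y i).natAbs) :=
      aux_pos _ _ (fun h => by omega)
    exact_mod_cast this
  -- strictness at i0
  have hcond : ¬((x i0).natAbs = (y i0).natAbs ∧
      (x i0 - y i0).natAbs = (x i0).natAbs + (y i0).natAbs) := by
    rintro ⟨hab, hds⟩
    apply hfirst
    refine ⟨x i0, rfl, ?_⟩
    have habs1 : |x i0 - y i0| = |x i0| + |y i0| := by
      rw [Int.abs_eq_natAbs, Int.abs_eq_natAbs, Int.abs_eq_natAbs]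
      exact_mod_cast hds
    have habs2 : |x i0| = |y i0| := by
      rw [Int.abs_eq_natAbs, Int.abs_eq_natAbs]
      exact_mod_cast hab
    have hsq2 : (x i0)^2 = (y i0)^2 := by
      rw [← sq_abs, habs2, sq_abs]
    have hxy : |x i0| * |y i0| = x i0 * x i0 := by
      rw [← habs2, abs_mul_abs_self]
    have h1sq : (|x i0 - y i0|)^2 = (|x i0| + |y i0|)^2 := by rw [habs1]
    have hzero : (x i0 + y i0)^2 = 0 := by
      nlinarith [sq_abs (x i0 - y i0), sq_abs (x i0), sq_abs (y i0), h1sq, hxy, hsq2]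
    have := pow_eq_zero_iff (n := 2) (by norm_num) |>.mp hzero
    linarith
  have hlt : (((x i0 - y i0).natAbs ^ (2 * (x i0 - y i0).natAbs) : ℚ) /
      (((2 * (x i0).natAbs) ^ (2 * (x i0).natAbs) : ℚ) *
        ((2 * (y i0).natAbs) ^ (2 * (y i0).natAbs) : ℚ))) < 1 := by
    rw [div_lt_one (hdenpos i0)]
    exact_mod_cast main_lt (hd i0) (hs i0) hcond
  calc (∏ i, (((x i - y i).natAbs ^ (2 * (x i - y i).natAbs) : ℚ) /
      (((2 * (x i).natAbs) ^ (2 * (x i).natAbs) : ℚ) *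
        ((2 * (y i).natAbs) ^ (2 * (y i).natAbs) : ℚ))))
      < ∏ _i : Fin n, (1:ℚ) :=
        Finset.prod_lt_prod hpos hle ⟨i0, Finset.mem_univ _, hlt⟩
    _ = 1 := by simp
end
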